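/- Let g(x) = ⟨b, x - x⁰⟩ + (λ/2)(x - x⁰)² be a scalar quadratic with -θ/η ≤ λ ≤ L and L ≤ 1/(4η), 0 < θ ≤ 1. Consider the perturbed AGD iteration y^k = x^k + (1-θ)(x^k - x^{k-1}), x^{k+1} = y^k - η g'(y^k) - η δ^k with x^{-1} = x^0. Define ℓ^{k+1} = g(x^{k+1}) + ((1+θ)(1-θ)²/(2η))|x^{k+1} - x^k|². Then for each k: ℓ^{k+1} ≤ ℓ^k - (3θ/(8η))|x^{k+1} - x^k|² + (2η/θ)|δ^k|². -/

import Mathlib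

lemma key_agd (p q e μ θ : ℝ) (hθ0 : 0 < θ) (hθ1 : θ ≤ 1) (hμ1 : -θ ≤ μ)
    (hμ2 : μ ≤ 1/4) :
    8*θ*(1-θ)*(1-μ)*p*q - 8*θ*p^2 - 8*θ*p*e + 4*θ*μ*p^2
      + 4*θ*(1+θ)*(1-θ)^2*(p^2-q^2) + 3*θ^2*p^2 - 16*e^2 ≤ 0 := by
  have hA : 0 < 1 - μ + θ^2 - θ^3 := by nlinarith [sq_nonneg θ, mul_nonneg (mul_nonneg hθ0.le hθ0.le) (sub_nonneg.2 hθ1)]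
  have hF : 0 ≤ (1-μ)*(θ+μ) := mul_nonneg (by linarith) (by linarith)
  have hquad : 0 ≤ (1 - μ + θ^2 - θ^3)/2*p^2 - (1-θ)*(1-μ)*p*q + (1-θ-θ^2+θ^3)/2*q^2 := by
    nlinarith [sq_nonneg ((1-μ+θ^2-θ^3)*p - (1-θ)*(1-μ)*q),
      mul_nonneg (mul_nonneg hF (sq_nonneg (1-θ))) (sq_nonneg q),
      mul_nonneg (mul_nonneg (mul_nonneg (sq_nonneg θ) (sub_nonneg.2 hθ1)) (by linarith : (0:ℝ) ≤ 1 + θ)) (mul_nonneg (sq_nonneg (1-θ)) (sq_nonneg q)),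
      hA]
  nlinarith [mul_nonneg hθ0.le hquad, sq_nonneg (θ*p + 4*e)]

theorem stmt_5 (b x0 l L η θ : ℝ) (hL : 0 ≤ L) (hη0 : 0 < η) (hη : η ≤ 1 / (4 * L))
    (hθ0 : 0 < θ) (hθ1 : θ ≤ 1) (hl1 : -(θ / η) ≤ l) (hl2 : l ≤ L)
    (g : ℝ → ℝ) (hg : g = fun x => b * (x - x0) + l / 2 * (x - x0) ^ 2)
    (X y δ : ℕ → ℝ)
    (hinit : X 0 = X 1)
    (hy : ∀ k, y k = X (k + 1) + (1 - θ) * (X (k + 1) - X k))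
    (hstep : ∀ k, X (k + 2) = y k - η * deriv g (y k) - η * δ k) :
    ∀ k, g (X (k + 2)) + ((1 + θ) * (1 - θ) ^ 2 / (2 * η)) * |X (k + 2) - X (k + 1)| ^ 2
      ≤ g (X (k + 1)) + ((1 + θ) * (1 - θ) ^ 2 / (2 * η)) * |X (k + 1) - X k| ^ 2
        - (3 * θ / (8 * η)) * |X (k + 2) - X (k + 1)| ^ 2 + (2 * η / θ) * |δ k| ^ 2 := by
  have hderiv : ∀ t, deriv g t = b + l * (t - x0) := by
    intro t
    have h : HasDerivAt g (b + l * (t - x0)) t := by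
      rw [hg]
      have h1 : HasDerivAt (fun x : ℝ => x - x0) 1 t := (hasDerivAt_id t).sub_const x0
      have h2 := (h1.const_mul b).add (((h1.pow 2).const_mul (l/2)))
      convert h2 using 1
      · rfl
      · rfl
      · rfl
      · simp
        ring
    exact h.deriv
  have hLpos : 0 < L := by
    rcases lt_or_eq_of_le hL with h | h
    · exact h
    · exfalso; rw [← h] at hη; simp at hη; linarith
  have hμ2 : η * l ≤ 1/4 := by
    have h1 : η * l ≤ η * L := by nlinarith
    have h2 : η * (4 * L) ≤ 1 := by
      rw [div_eq_inv_mul] at hη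
      calc η * (4*L) ≤ (4*L)⁻¹ * 1 * (4*L) := by nlinarith
        _ = 1 := by field_simp
    nlinarith
  have hμ1 : -θ ≤ η * l := by
    have := mul_le_mul_of_nonneg_left hl1 hη0.le
    rw [mul_neg, mul_div_cancel₀ _ (ne_of_gt hη0)] at this
    linarith
  intro k
  have hstepk := hstep k
  rw [hderiv, hy k] at hstepk
  simp only [sq_abs]
  set d : ℝ := δ k with hd
  set xk : ℝ := X k with hxk
  set x1 : ℝ := X (k+1) with hx1
  set x2 : ℝ := X (k+2) with hx2
  have hbe : η * (b + l * (x1 - x0)) = (1-θ)*(x1-xk) - (x2-x1) - η*d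
      - η*l*(1-θ)*(x1-xk) := by linear_combination hstepk
  have hkey := key_agd (x2-x1) (x1-xk) (η*d) (η*l) θ hθ0 hθ1 hμ1 hμ2
  rw [hg]
  simp only []
  rw [← sub_nonneg]
  have hpos : (0:ℝ) < 8*η*θ := by positivity
  have hid : b * (x1 - x0) + l / 2 * (x1 - x0) ^ 2
        + ((1 + θ) * (1 - θ) ^ 2 / (2 * η)) * (x1 - xk) ^ 2
        - (3 * θ / (8 * η)) * (x2 - x1) ^ 2 + (2 * η / θ) * d ^ 2
      - (b * (x2 - x0) + l / 2 * (x2 - x0) ^ 2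
        + ((1 + θ) * (1 - θ) ^ 2 / (2 * η)) * (x2 - x1) ^ 2)
      = (-(8*θ*(1-θ)*(1-(η*l))*(x2-x1)*(x1-xk) - 8*θ*(x2-x1)^2 - 8*θ*(x2-x1)*(η*d)
        + 4*θ*(η*l)*(x2-x1)^2 + 4*θ*(1+θ)*(1-θ)^2*((x2-x1)^2-(x1-xk)^2)
        + 3*θ^2*(x2-x1)^2 - 16*(η*d)^2)) / (8*η*θ) := by
    field_simp
    linear_combination (16*θ*(x1-x2)) * hbe
  rw [hid]
  apply div_nonneg (by linarith) hpos.le
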